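/- Let A and B be bounded operators on ℓ²(ℤ²) such that: for every μ ≥ 0 there exists C ≥ 0 with |A_{ij}| ≤ C(1+‖i−j‖)^{−μ}(1+|i₁|)^{−μ}(1+|j₁|)^{−μ} for all i,j ∈ ℤ², and for every μ ≥ 0 there exists C ≥ 0 with |B_{ij}| ≤ C(1+‖i−j‖)^{−μ}(1+|i₂|)^{−μ}(1+|j₂|)^{−μ} for all i,j ∈ ℤ². Then the matrix entries of the composition A∘B are absolutely summable: the family (i,j) ↦ |(A∘B)_{ij}| over ℤ²×ℤ² is summable. -/
import Mathlib

open scoped InnerProductSpace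
open ContinuousLinearMap

/-- The standard orthonormal basis of `ℓ²(ℤ²)`. -/
noncomputable def stdBasis (i : ℤ × ℤ) : lp (fun _ : ℤ × ℤ => ℂ) 2 := lp.single 2 i 1

/-- Matrix entries `T_{ij} = ⟪e_i, T e_j⟫` of a bounded operator on `ℓ²(ℤ²)`. -/
noncomputable def matrixEntry
    (T : lp (fun _ : ℤ × ℤ => ℂ) 2 →L[ℂ] lp (fun _ : ℤ × ℤ => ℂ) 2) (i j : ℤ × ℤ) : ℂ :=
  ⟪stdBasis i, T (stdBasis j)⟫_ℂ

/-- The Euclidean norm on `ℤ²`. -/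
noncomputable def euclNorm (v : ℤ × ℤ) : ℝ := Real.sqrt ((v.1 : ℝ) ^ 2 + (v.2 : ℝ) ^ 2)

lemma euclNorm_nonneg' (v : ℤ × ℤ) : 0 ≤ euclNorm v := Real.sqrt_nonneg _

lemma abs_fst_le_euclNorm (v : ℤ × ℤ) : |(v.1 : ℝ)| ≤ euclNorm v := by
  rw [euclNorm, ← Real.sqrt_sq_eq_abs]
  exact Real.sqrt_le_sqrt (by nlinarith [sq_nonneg ((v.2:ℝ))])

lemma abs_snd_le_euclNorm (v : ℤ × ℤ) : |(v.2 : ℝ)| ≤ euclNorm v := by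
  rw [euclNorm, ← Real.sqrt_sq_eq_abs]
  exact Real.sqrt_le_sqrt (by nlinarith [sq_nonneg ((v.1:ℝ))])

lemma summable_int_one_add_abs_rpow_neg_two :
    Summable fun n : ℤ => (1 + |(n : ℝ)|) ^ (-(2:ℝ)) := by
  have hnat : Summable fun n : ℕ => ((1:ℝ) + n) ^ (-(2:ℝ)) := by
    have h0 : Summable fun n : ℕ => ((n : ℝ)) ^ (-(2:ℝ)) :=
      Real.summable_nat_rpow.mpr (by norm_num)
    have h1 := (summable_nat_add_iff (f := fun n : ℕ => ((n : ℝ)) ^ (-(2:ℝ))) 1).mpr h0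
    refine h1.congr fun n => ?_
    push_cast
    ring_nf
  refine Summable.of_nat_of_neg ?_ ?_ <;>
    · refine hnat.congr fun n => ?_
      push_cast
      simp [abs_neg, abs_of_nonneg (show (0:ℝ) ≤ (n:ℝ) by positivity)]

lemma key_ineq {Ca Cb D1 D2 a b c d e f : ℝ}
    (hCa : 0 ≤ Ca) (hCb : 0 ≤ Cb)
    (hD1 : 1 ≤ D1) (hD2 : 1 ≤ D2) (ha : 1 ≤ a) (hb : 1 ≤ b) (hc : 1 ≤ c) (hd : 1 ≤ d)
    (he : 1 ≤ e) (hf : 1 ≤ f) (h1 : b ≤ D1 * f) (h2 : c ≤ D2 * e) :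
    (Ca * D1 ^ (-(4:ℝ)) * a ^ (-(4:ℝ)) * e ^ (-(4:ℝ))) *
      (Cb * D2 ^ (-(4:ℝ)) * f ^ (-(4:ℝ)) * d ^ (-(4:ℝ)))
    ≤ Ca * Cb * ((a ^ (-(2:ℝ)) * b ^ (-(2:ℝ))) *
        ((c ^ (-(2:ℝ)) * d ^ (-(2:ℝ))) * (e ^ (-(2:ℝ)) * f ^ (-(2:ℝ))))) := by
  have split : ∀ x : ℝ, 1 ≤ x → x ^ (-(4:ℝ)) = x ^ (-(2:ℝ)) * x ^ (-(2:ℝ)) := by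
    intro x hx
    rw [← Real.rpow_add (by linarith)]
    norm_num
  have anti : ∀ x y : ℝ, 1 ≤ x → x ≤ y → y ^ (-(2:ℝ)) ≤ x ^ (-(2:ℝ)) := fun x y hx hxy =>
    Real.rpow_le_rpow_of_nonpos (by linarith) hxy (by norm_num)
  have le1 : ∀ x : ℝ, 1 ≤ x → x ^ (-(2:ℝ)) ≤ 1 := fun x hx =>
    Real.rpow_le_one_of_one_le_of_nonpos hx (by norm_num)
  have hb2 : D1 ^ (-(2:ℝ)) * f ^ (-(2:ℝ)) ≤ b ^ (-(2:ℝ)) := by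
    rw [← Real.mul_rpow (by linarith) (by linarith)]
    exact anti _ _ hb h1
  have hc2 : D2 ^ (-(2:ℝ)) * e ^ (-(2:ℝ)) ≤ c ^ (-(2:ℝ)) := by
    rw [← Real.mul_rpow (by linarith) (by linarith)]
    exact anti _ _ hc h2
  calc (Ca * D1 ^ (-(4:ℝ)) * a ^ (-(4:ℝ)) * e ^ (-(4:ℝ))) *
        (Cb * D2 ^ (-(4:ℝ)) * f ^ (-(4:ℝ)) * d ^ (-(4:ℝ)))
      = (Ca * Cb) * ((D1 ^ (-(2:ℝ)) * f ^ (-(2:ℝ))) * ((D2 ^ (-(2:ℝ)) * e ^ (-(2:ℝ))) *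
          (a ^ (-(4:ℝ)) * (d ^ (-(4:ℝ)) * ((e ^ (-(2:ℝ)) * f ^ (-(2:ℝ))) *
          (D1 ^ (-(2:ℝ)) * D2 ^ (-(2:ℝ)))))))) := by
        rw [split D1 hD1, split D2 hD2, split e he, split f hf]; ring
    _ ≤ (Ca * Cb) * ((b ^ (-(2:ℝ))) * ((c ^ (-(2:ℝ))) *
          (a ^ (-(2:ℝ)) * (d ^ (-(2:ℝ)) * ((e ^ (-(2:ℝ)) * f ^ (-(2:ℝ))) *
          (1 * 1)))))) := by
        have ha4 : a ^ (-(4:ℝ)) ≤ a ^ (-(2:ℝ)) :=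
          Real.rpow_le_rpow_of_exponent_le ha (by norm_num)
        have hd4 : d ^ (-(4:ℝ)) ≤ d ^ (-(2:ℝ)) :=
          Real.rpow_le_rpow_of_exponent_le hd (by norm_num)
        gcongr <;> first
          | exact mul_nonneg hCa hCb
          | positivity
          | exact hb2 | exact hc2 | exact ha4 | exact hd4
          | exact le1 _ hD1 | exact le1 _ hD2
    _ = Ca * Cb * ((a ^ (-(2:ℝ)) * b ^ (-(2:ℝ))) *
        ((c ^ (-(2:ℝ)) * d ^ (-(2:ℝ))) * (e ^ (-(2:ℝ)) * f ^ (-(2:ℝ))))) := by ring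

lemma hasSum_matrixEntry_comp
    (A B : lp (fun _ : ℤ × ℤ => ℂ) 2 →L[ℂ] lp (fun _ : ℤ × ℤ => ℂ) 2) (i j : ℤ × ℤ) :
    HasSum (fun k => matrixEntry A i k * matrixEntry B k j) (matrixEntry (A ∘L B) i j) := by
  set y := B (stdBasis j) with hy
  have h1 : HasSum (fun k : ℤ × ℤ => lp.single 2 k (y k)) y :=
    lp.hasSum_single (by norm_num) y
  have h2 : HasSum (fun k : ℤ × ℤ => A (lp.single 2 k (y k))) (A y) := A.hasSum h1
  have h3 : HasSum (fun k : ℤ × ℤ => ⟪stdBasis i, A (lp.single 2 k (y k))⟫_ℂ)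
      ⟪stdBasis i, A y⟫_ℂ := (innerSL ℂ (stdBasis i)).hasSum h2
  have hval : ∀ k : ℤ × ℤ, ⟪stdBasis i, A (lp.single 2 k (y k))⟫_ℂ
      = matrixEntry A i k * matrixEntry B k j := by
    intro k
    have hs : lp.single 2 k (y k) = y k • stdBasis k := by
      rw [stdBasis, ← lp.single_smul, smul_eq_mul, mul_one]
    have hyk : matrixEntry B k j = y k := by
      rw [matrixEntry, ← hy, stdBasis, lp.inner_single_left]
      simp
    rw [hs, map_smul, inner_smul_right, hyk, matrixEntry, mul_comm]
  exact h3.congr_fun fun k => (hval k).symm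

/-- If `A` decays rapidly away from the vertical axis (in the sense that
for every `μ ≥ 0` there is `C ≥ 0` with
`|A_{ij}| ≤ C (1+‖i-j‖)^{-μ} (1+|i₁|)^{-μ} (1+|j₁|)^{-μ}`) and `B` decays rapidly away from
the horizontal axis (with `i₂, j₂` in place of `i₁, j₁`), then the matrix entries of `A∘B`
are absolutely summable. -/
theorem product_of_transversally_decaying_is_trace_class
    (A B : lp (fun _ : ℤ × ℤ => ℂ) 2 →L[ℂ] lp (fun _ : ℤ × ℤ => ℂ) 2)
    (hA : ∀ μ : ℝ, 0 ≤ μ → ∃ C : ℝ, 0 ≤ C ∧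
      ∀ i j : ℤ × ℤ, ‖matrixEntry A i j‖
        ≤ C * (1 + euclNorm (i - j)) ^ (-μ) * (1 + |(i.1 : ℝ)|) ^ (-μ)
          * (1 + |(j.1 : ℝ)|) ^ (-μ))
    (hB : ∀ μ : ℝ, 0 ≤ μ → ∃ C : ℝ, 0 ≤ C ∧
      ∀ i j : ℤ × ℤ, ‖matrixEntry B i j‖
        ≤ C * (1 + euclNorm (i - j)) ^ (-μ) * (1 + |(i.2 : ℝ)|) ^ (-μ)
          * (1 + |(j.2 : ℝ)|) ^ (-μ)) :
    Summable fun p : (ℤ × ℤ) × (ℤ × ℤ) => ‖matrixEntry (A ∘L B) p.1 p.2‖ := by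
  obtain ⟨Ca, hCa0, hCa⟩ := hA 4 (by norm_num)
  obtain ⟨Cb, hCb0, hCb⟩ := hB 4 (by norm_num)
  set u : ℤ × ℤ → ℝ := fun k => (1 + |(k.1 : ℝ)|) ^ (-(2:ℝ)) * (1 + |(k.2 : ℝ)|) ^ (-(2:ℝ))
    with hu
  have hu0 : ∀ k, 0 ≤ u k := fun k => by positivity
  have hSu : Summable u :=
    summable_int_one_add_abs_rpow_neg_two.mul_of_nonneg
      summable_int_one_add_abs_rpow_neg_two
      (fun n => by positivity) (fun n => by positivity)
  -- pointwise bound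
  have hpt : ∀ i j k : ℤ × ℤ, ‖matrixEntry A i k‖ * ‖matrixEntry B k j‖
      ≤ (Ca * Cb) * (u i * (u j * u k)) := by
    intro i j k
    have hd1 : (1 + |(i.2 : ℝ)|) ≤ (1 + euclNorm (i - k)) * (1 + |(k.2 : ℝ)|) := by
      have h1 := abs_snd_le_euclNorm (i - k)
      have h2 : |(i.2 : ℝ) - (k.2 : ℝ)| ≤ euclNorm (i - k) := by
        simpa [Prod.snd_sub] using h1
      have h3 := abs_sub_abs_le_abs_sub (i.2 : ℝ) (k.2 : ℝ)
      have h4 : (0:ℝ) ≤ |(k.2 : ℝ)| := abs_nonneg _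
      have h5 := euclNorm_nonneg' (i - k)
      nlinarith
    have hd2 : (1 + |(j.1 : ℝ)|) ≤ (1 + euclNorm (k - j)) * (1 + |(k.1 : ℝ)|) := by
      have h1 := abs_fst_le_euclNorm (k - j)
      have h2 : |(j.1 : ℝ) - (k.1 : ℝ)| ≤ euclNorm (k - j) := by
        rw [abs_sub_comm]
        simpa [Prod.fst_sub] using h1
      have h3 := abs_sub_abs_le_abs_sub (j.1 : ℝ) (k.1 : ℝ)
      have h4 : (0:ℝ) ≤ |(k.1 : ℝ)| := abs_nonneg _
      have h5 := euclNorm_nonneg' (k - j)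
      nlinarith
    calc ‖matrixEntry A i k‖ * ‖matrixEntry B k j‖
        ≤ (Ca * (1 + euclNorm (i - k)) ^ (-(4:ℝ)) * (1 + |(i.1 : ℝ)|) ^ (-(4:ℝ))
            * (1 + |(k.1 : ℝ)|) ^ (-(4:ℝ))) *
          (Cb * (1 + euclNorm (k - j)) ^ (-(4:ℝ)) * (1 + |(k.2 : ℝ)|) ^ (-(4:ℝ))
            * (1 + |(j.2 : ℝ)|) ^ (-(4:ℝ))) := by
          have hE : (0:ℝ) ≤ euclNorm (i - k) := euclNorm_nonneg' _
          exact mul_le_mul (hCa i k) (hCb k j) (norm_nonneg _) (by positivity)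
      _ ≤ (Ca * Cb) * (u i * (u j * u k)) := by
          refine key_ineq hCa0 hCb0 ?_ ?_ ?_ ?_ ?_ ?_ ?_ ?_ hd1 hd2 <;>
            simp only [le_add_iff_nonneg_right] <;>
            first
              | exact euclNorm_nonneg' _
              | exact abs_nonneg _
  have habs : ∀ i j : ℤ × ℤ, ‖matrixEntry (A ∘L B) i j‖
      ≤ ((Ca * Cb) * ∑' k, u k) * (u i * u j) := by
    intro i j
    have hsum : Summable fun k : ℤ × ℤ => ‖matrixEntry A i k * matrixEntry B k j‖ := by
      refine Summable.of_nonneg_of_le (fun k => norm_nonneg _) (fun k => ?_)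
        (((hSu.mul_left (u j)).mul_left (u i)).mul_left (Ca * Cb))
      rw [norm_mul]
      exact hpt i j k
    have heq : matrixEntry (A ∘L B) i j = ∑' k, matrixEntry A i k * matrixEntry B k j :=
      (hasSum_matrixEntry_comp A B i j).tsum_eq.symm
    calc ‖matrixEntry (A ∘L B) i j‖
        = ‖∑' k, matrixEntry A i k * matrixEntry B k j‖ := by rw [heq]
      _ ≤ ∑' k, ‖matrixEntry A i k * matrixEntry B k j‖ := norm_tsum_le_tsum_norm hsum
      _ ≤ ∑' k, ((Ca * Cb) * (u i * u j)) * u k := by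
          refine Summable.tsum_le_tsum (fun k => ?_) hsum (hSu.mul_left _)
          rw [norm_mul]
          calc ‖matrixEntry A i k‖ * ‖matrixEntry B k j‖
              ≤ (Ca * Cb) * (u i * (u j * u k)) := hpt i j k
            _ = ((Ca * Cb) * (u i * u j)) * u k := by ring
      _ = ((Ca * Cb) * (u i * u j)) * ∑' k, u k := tsum_mul_left
      _ = ((Ca * Cb) * ∑' k, u k) * (u i * u j) := by ring
  refine Summable.of_nonneg_of_le (fun p => norm_nonneg _) (fun p => habs p.1 p.2) ?_
  exact (hSu.mul_of_nonneg hSu hu0 hu0).mul_left _
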